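/- For the rational functions b(x) = (-27/4)·x²·(x-1), c(x) = (-8·b(x) - 1)/(4·b(x) - 4), and g(x) = 6912·x³·(x+2)/(4x-1), the composition g(c(x)), after substituting x/3 for x, equals 6912·(2x³ - 6x² - 1)³ / ((x-2)⁶·(x+1)³·x²·(x-3)) as rational functions over ℚ. -/

import Mathlib

open RatFunc

noncomputable section

/-- The degree 3 Belyĭ map `b(x) = (-27/4) x² (x - 1)`, precomposed with `x ↦ x/3`. -/
def caseII_b3 : RatFunc ℚ :=
  ((-27/4 : ℚ) : RatFunc ℚ) * (RatFunc.X / 3) ^ 2 * (RatFunc.X / 3 - 1)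

/-- The Möbius-moved map `c(x) = (-8 b(x) - 1)/(4 b(x) - 4)`, precomposed with `x ↦ x/3`. -/
def caseII_c3 : RatFunc ℚ :=
  (-8 * caseII_b3 - 1) / (4 * caseII_b3 - 4)

/-- The degree 4 map `g(x) = 6912 x³ (x + 2)/(4x - 1)` evaluated at `c(x/3)`,
i.e. the composition `g ∘ c` precomposed with `x ↦ x/3`. -/
def caseII_gc3 : RatFunc ℚ :=
  6912 * caseII_c3 ^ 3 * (caseII_c3 + 2) / (4 * caseII_c3 - 1)

instance : CharZero (RatFunc ℚ) :=
  charZero_of_injective_algebraMap (algebraMap ℚ (RatFunc ℚ)).injective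

lemma Xsub (a : ℚ) : (RatFunc.X - (algebraMap ℚ (RatFunc ℚ)) a : RatFunc ℚ) ≠ 0 := by
  have : (RatFunc.X - algebraMap ℚ (RatFunc ℚ) a : RatFunc ℚ)
      = algebraMap (Polynomial ℚ) (RatFunc ℚ) (Polynomial.X - Polynomial.C a) := by
    simp [RatFunc.algebraMap_C]
  rw [this]
  exact RatFunc.algebraMap_ne_zero (Polynomial.X_sub_C_ne_zero a)

lemma h2' : (RatFunc.X - 2 : RatFunc ℚ) ≠ 0 := by simpa using Xsub 2
lemma h1' : (RatFunc.X + 1 : RatFunc ℚ) ≠ 0 := by simpa [sub_neg_eq_add] using Xsub (-1)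
lemma h0' : (RatFunc.X : RatFunc ℚ) ≠ 0 := by simpa using Xsub 0
lemma h3' : (RatFunc.X - 3 : RatFunc ℚ) ≠ 0 := by simpa using Xsub 3

lemma hD0 : ((RatFunc.X-2)^2*(RatFunc.X+1) : RatFunc ℚ) ≠ 0 :=
  mul_ne_zero (pow_ne_zero 2 h2') h1'

lemma hb : caseII_b3 = -(RatFunc.X^2 * (RatFunc.X - 3)) / 4 := by
  unfold caseII_b3
  have : ((-27/4 : ℚ) : RatFunc ℚ) = -27/4 := by norm_cast
  rw [this]
  field_simp
  ring

lemma hden : 4 * caseII_b3 - 4 = -((RatFunc.X-2)^2*(RatFunc.X+1)) := by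
  rw [hb]; field_simp; ring

lemma hc : caseII_c3 = -((2*RatFunc.X^3 - 6*RatFunc.X^2 - 1) / ((RatFunc.X-2)^2*(RatFunc.X+1))) := by
  unfold caseII_c3
  rw [hden, hb]
  field_simp [hD0]
  ring

lemma hc4 : 4 * caseII_c3 - 1
    = -(9 * RatFunc.X^2 * (RatFunc.X - 3)) / ((RatFunc.X-2)^2*(RatFunc.X+1)) := by
  rw [hc]
  field_simp [h2', h1']
  ring

/-- The composition `g(c(x))`, after substituting `x/3` for `x`, equals the
case II Belyĭ map `6912 (2x³ - 6x² - 1)³ / ((x-2)⁶ (x+1)³ x² (x-3))` in `ℚ(x)`. -/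
theorem caseII_belyi_decomposition :
    caseII_gc3 =
      6912 * (2 * RatFunc.X ^ 3 - 6 * RatFunc.X ^ 2 - 1) ^ 3 /
        ((RatFunc.X - 2) ^ 6 * (RatFunc.X + 1) ^ 3 * RatFunc.X ^ 2 * (RatFunc.X - 3)) := by
  unfold caseII_gc3
  rw [hc4, hc]
  have hN : (9 * RatFunc.X^2 * (RatFunc.X - 3) : RatFunc ℚ) ≠ 0 :=
    mul_ne_zero (mul_ne_zero (by norm_num) (pow_ne_zero 2 h0')) h3'
  have hRD : ((RatFunc.X - 2) ^ 6 * (RatFunc.X + 1) ^ 3 * RatFunc.X ^ 2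
      * (RatFunc.X - 3) : RatFunc ℚ) ≠ 0 :=
    mul_ne_zero (mul_ne_zero (mul_ne_zero (pow_ne_zero 6 h2') (pow_ne_zero 3 h1'))
      (pow_ne_zero 2 h0')) h3'
  field_simp [h2', h1', h0', h3']
  ring

end
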